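/- arXiv:0810.2132 — 2 statements merged into one kernel-verified Lean document; each statement's English description precedes it below -/
import Mathlib

section
/- (Inclusion Theorem) Let 0 < q ≤ p ≤ ∞ and 0 < q_j ≤ p_j ≤ ∞ for j = 1,…,n, with 1/q ≤ 1/q_1 + ⋯ + 1/q_n, and suppose 1/q_1 + ⋯ + 1/q_n − 1/q ≤ 1/p_1 + ⋯ + 1/p_n − 1/p. Then every absolutely (q;q_1,…,q_n)-summing continuous n-linear map A : E_1 × ⋯ × E_n → F between real or complex Banach spaces is absolutely (p;p_1,…,p_n)-summing, and π_{(p;p_1,…,p_n)}(A) ≤ π_{(q;q_1,…,q_n)}(A). -/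
open scoped BigOperators NNReal ENNReal

/-- The `ℓ_p` norm of a finite family, for an extended-real exponent `p ∈ (0, ∞]`
(with the sup-norm interpretation when `p = ∞`). -/
noncomputable def lpNormE {F : Type*} [NormedAddCommGroup F] (p : ℝ≥0∞) {m : ℕ}
    (y : Fin m → F) : ℝ :=
  if p = ∞ then ⨆ j, ‖y j‖ else (∑ j, ‖y j‖ ^ p.toReal) ^ (1 / p.toReal)

/-- The weak `ℓ_r` norm of a finite family, for an extended-real exponent `r ∈ (0, ∞]`
(with the interpretation `max_j ‖x_j‖` when `r = ∞`). -/
noncomputable def weakNormE (𝕜 : Type*) [RCLike 𝕜] {E : Type*} [NormedAddCommGroup E]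
    [NormedSpace 𝕜 E] (r : ℝ≥0∞) {m : ℕ} (x : Fin m → E) : ℝ :=
  if r = ∞ then ⨆ j, ‖x j‖
  else ⨆ φ : {φ : E →L[𝕜] 𝕜 // ‖φ‖ ≤ 1}, (∑ j, ‖φ.1 (x j)‖ ^ r.toReal) ^ (1 / r.toReal)

/-- A continuous multilinear map is absolutely `(p; p₁, …, pₙ)`-summing, for
extended-real exponents. -/
def IsAbsSummingE {𝕜 : Type*} [RCLike 𝕜] {n : ℕ} {E : Fin n → Type*}
    [∀ i, NormedAddCommGroup (E i)] [∀ i, NormedSpace 𝕜 (E i)]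
    {F : Type*} [NormedAddCommGroup F] [NormedSpace 𝕜 F]
    (p : ℝ≥0∞) (ps : Fin n → ℝ≥0∞) (A : ContinuousMultilinearMap 𝕜 E F) : Prop :=
  ∃ C > 0, ∀ (m : ℕ) (x : ∀ i, Fin m → E i),
    lpNormE p (fun j => A (fun i => x i j)) ≤ C * ∏ i, weakNormE 𝕜 (ps i) (x i)



private lemma aux_sum_rpow_le {m : ℕ} (b : Fin m → ℝ) (hb : ∀ j, 0 ≤ b j) {t : ℝ} (ht : 1 ≤ t) :
    ∑ j, b j ^ t ≤ (∑ j, b j) ^ t := by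
  have hS : 0 ≤ ∑ j, b j := Finset.sum_nonneg fun j _ => hb j
  have key : ∀ j, b j ^ t ≤ (∑ k, b k) ^ (t - 1) * b j := by
    intro j
    rcases eq_or_lt_of_le (hb j) with h0 | h0
    · rw [← h0, Real.zero_rpow (by linarith), mul_zero]
    · have hbj : b j ≤ ∑ k, b k := Finset.single_le_sum (fun k _ => hb k) (Finset.mem_univ j)
      calc b j ^ t = b j ^ (t - 1) * b j := by
            rw [← Real.rpow_add_one (ne_of_gt h0)]; ring_nf
        _ ≤ (∑ k, b k) ^ (t - 1) * b j :=
            mul_le_mul_of_nonneg_right (Real.rpow_le_rpow (hb j) hbj (by linarith)) (hb j)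
  calc ∑ j, b j ^ t ≤ ∑ j, (∑ k, b k) ^ (t - 1) * b j :=
        Finset.sum_le_sum fun j _ => key j
    _ = (∑ k, b k) ^ (t - 1) * ∑ j, b j := by rw [← Finset.mul_sum]
    _ ≤ (∑ j, b j) ^ t := by
        rcases eq_or_lt_of_le hS with h0 | h0
        · rw [← h0, mul_zero, Real.zero_rpow (ne_of_gt (lt_of_lt_of_le one_pos ht))]
        · rw [← Real.rpow_add_one (ne_of_gt h0)]; ring_nf; exact le_refl _

private lemma aux_lp_mono {m : ℕ} (a : Fin m → ℝ) (ha : ∀ j, 0 ≤ a j) {u v : ℝ}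
    (hv : 0 < v) (huv : v ≤ u) :
    (∑ j, a j ^ u) ^ (1 / u) ≤ (∑ j, a j ^ v) ^ (1 / v) := by
  have hu : 0 < u := lt_of_lt_of_le hv huv
  have h1 : ∀ j, a j ^ u = (a j ^ v) ^ (u / v) := by
    intro j
    rw [← Real.rpow_mul (ha j)]
    congr 1
    field_simp
  have h2 : ∑ j, a j ^ u ≤ (∑ j, a j ^ v) ^ (u / v) := by
    calc ∑ j, a j ^ u = ∑ j, (a j ^ v) ^ (u / v) := by simp_rw [h1]
      _ ≤ (∑ j, a j ^ v) ^ (u / v) :=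
          aux_sum_rpow_le _ (fun j => Real.rpow_nonneg (ha j) _) ((one_le_div hv).2 huv)
  calc (∑ j, a j ^ u) ^ (1 / u) ≤ ((∑ j, a j ^ v) ^ (u / v)) ^ (1 / u) :=
        Real.rpow_le_rpow (Finset.sum_nonneg fun j _ => Real.rpow_nonneg (ha j) _) h2
          (by positivity)
    _ = (∑ j, a j ^ v) ^ (1 / v) := by
        rw [← Real.rpow_mul (Finset.sum_nonneg fun j _ => Real.rpow_nonneg (ha j) _)]
        congr 1
        field_simp

private lemma aux_single_le {m : ℕ} (a : Fin m → ℝ) (ha : ∀ j, 0 ≤ a j) {v : ℝ}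
    (hv : 0 < v) (j : Fin m) : a j ≤ (∑ k, a k ^ v) ^ (1 / v) := by
  have h1 : a j ^ v ≤ ∑ k, a k ^ v :=
    Finset.single_le_sum (fun k _ => Real.rpow_nonneg (ha k) _) (Finset.mem_univ j)
  calc a j = (a j ^ v) ^ (1 / v) := by
        rw [← Real.rpow_mul (ha j), mul_one_div, div_self (ne_of_gt hv), Real.rpow_one]
    _ ≤ (∑ k, a k ^ v) ^ (1 / v) :=
        Real.rpow_le_rpow (Real.rpow_nonneg (ha j) _) h1 (by positivity)

private lemma aux_holder {m : ℕ} (lam c : Fin m → ℝ) (hlam : ∀ j, 0 ≤ lam j)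
    (hc : ∀ j, 0 ≤ c j) {w u v : ℝ} (hw : 0 < w) (hu : 0 < u) (hv : 0 < v)
    (h : 1 / w = 1 / u + 1 / v) :
    (∑ j, (lam j * c j) ^ w) ^ (1 / w)
      ≤ (∑ j, lam j ^ u) ^ (1 / u) * (∑ j, c j ^ v) ^ (1 / v) := by
  have hwu : w < u := by
    have h1 : 1 / u < 1 / w := by
      rw [h]; have : 0 < 1 / v := by positivity
      linarith
    exact lt_of_one_div_lt_one_div hu h1
  have hconj : Real.HolderConjugate (u / w) (v / w) := by
    constructor
    · rw [inv_div, inv_div, inv_one]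
      have hh : w / u + w / v = w * (1 / u + 1 / v) := by ring
      rw [hh, ← h, mul_one_div, div_self (ne_of_gt hw)]
    · positivity
    · positivity
  have key : ∑ j, (lam j ^ w) * (c j ^ w)
      ≤ (∑ j, (lam j ^ w) ^ (u / w)) ^ (1 / (u / w))
        * (∑ j, (c j ^ w) ^ (v / w)) ^ (1 / (v / w)) :=
    Real.inner_le_Lp_mul_Lq_of_nonneg _ hconj
      (fun j _ => Real.rpow_nonneg (hlam j) _) (fun j _ => Real.rpow_nonneg (hc j) _)
  have e1 : ∀ j, (lam j ^ w) ^ (u / w) = lam j ^ u := by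
    intro j; rw [← Real.rpow_mul (hlam j)]; congr 1; field_simp
  have e2 : ∀ j, (c j ^ w) ^ (v / w) = c j ^ v := by
    intro j; rw [← Real.rpow_mul (hc j)]; congr 1; field_simp
  have e3 : ∀ j, (lam j * c j) ^ w = (lam j ^ w) * (c j ^ w) :=
    fun j => Real.mul_rpow (hlam j) (hc j)
  simp_rw [e1, e2, e3] at key ⊢
  calc (∑ j, lam j ^ w * c j ^ w) ^ (1 / w)
      ≤ ((∑ j, lam j ^ u) ^ (1 / (u / w)) * (∑ j, c j ^ v) ^ (1 / (v / w))) ^ (1 / w) :=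
        Real.rpow_le_rpow (Finset.sum_nonneg fun j _ =>
          mul_nonneg (Real.rpow_nonneg (hlam j) _) (Real.rpow_nonneg (hc j) _)) key
          (by positivity)
    _ = (∑ j, lam j ^ u) ^ (1 / u) * (∑ j, c j ^ v) ^ (1 / v) := by
        rw [Real.mul_rpow
            (Real.rpow_nonneg (Finset.sum_nonneg fun j _ => Real.rpow_nonneg (hlam j) _) _)
            (Real.rpow_nonneg (Finset.sum_nonneg fun j _ => Real.rpow_nonneg (hc j) _) _),
          ← Real.rpow_mul (Finset.sum_nonneg fun j _ => Real.rpow_nonneg (hlam j) _),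
          ← Real.rpow_mul (Finset.sum_nonneg fun j _ => Real.rpow_nonneg (hc j) _)]
        congr 2 <;> field_simp


section weak
variable {𝕜 : Type*} [RCLike 𝕜] {E : Type*} [NormedAddCommGroup E] [NormedSpace 𝕜 E]
  {m : ℕ} (x : Fin m → E)

private lemma weak_bdd {t : ℝ} (ht : 0 < t) :
    BddAbove (Set.range fun φ : {φ : E →L[𝕜] 𝕜 // ‖φ‖ ≤ 1} =>
      (∑ j, ‖φ.1 (x j)‖ ^ t) ^ (1 / t)) := by
  refine ⟨(∑ j, ‖x j‖ ^ t) ^ (1 / t), ?_⟩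
  rintro y ⟨φ, rfl⟩
  refine Real.rpow_le_rpow (Finset.sum_nonneg fun j _ => Real.rpow_nonneg (norm_nonneg _) _)
    (Finset.sum_le_sum fun j _ => Real.rpow_le_rpow (norm_nonneg _) ?_ (le_of_lt ht))
    (by positivity)
  calc ‖φ.1 (x j)‖ ≤ ‖φ.1‖ * ‖x j‖ := ContinuousLinearMap.le_opNorm _ _
    _ ≤ 1 * ‖x j‖ := mul_le_mul_of_nonneg_right φ.2 (norm_nonneg _)
    _ = ‖x j‖ := one_mul _

private lemma weakNormE_nonneg (r : ℝ≥0∞) : 0 ≤ weakNormE 𝕜 r x := by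
  unfold weakNormE
  split
  · exact Real.iSup_nonneg fun j => norm_nonneg _
  · exact Real.iSup_nonneg fun φ => Real.rpow_nonneg
      (Finset.sum_nonneg fun j _ => Real.rpow_nonneg (norm_nonneg _) _) _

private lemma term_le_weakNormE {r : ℝ≥0∞} (hr0 : 0 < r) (hr : r ≠ ∞)
    (φ : E →L[𝕜] 𝕜) (hφ : ‖φ‖ ≤ 1) :
    (∑ j, ‖φ (x j)‖ ^ r.toReal) ^ (1 / r.toReal) ≤ weakNormE 𝕜 r x := by
  unfold weakNormE
  rw [if_neg hr]
  exact le_ciSup (weak_bdd x (ENNReal.toReal_pos (ne_of_gt hr0) hr)) ⟨φ, hφ⟩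

private lemma norm_le_weakNormE {r : ℝ≥0∞} (hr : 0 < r) (j : Fin m) :
    ‖x j‖ ≤ weakNormE 𝕜 r x := by
  by_cases hrt : r = ∞
  · unfold weakNormE
    rw [if_pos hrt]
    exact le_ciSup (f := fun j => ‖x j‖) (Set.Finite.bddAbove (Set.finite_range _)) j
  · have ht : 0 < r.toReal := ENNReal.toReal_pos (ne_of_gt hr) hrt
    obtain ⟨φ, hφ1, hφ2⟩ := exists_dual_vector'' 𝕜 (x j)
    have hnorm : ‖x j‖ = ‖φ (x j)‖ := by
      rw [hφ2]
      simp
    calc ‖x j‖ = ‖φ (x j)‖ := hnorm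
      _ ≤ (∑ k, ‖φ (x k)‖ ^ r.toReal) ^ (1 / r.toReal) :=
          aux_single_le (fun k => ‖φ (x k)‖) (fun k => norm_nonneg _) ht j
      _ ≤ weakNormE 𝕜 r x := term_le_weakNormE x hr hrt φ hφ1

private lemma weakNormE_single_le {r : ℝ≥0∞} (hr : 0 < r) (y : E) :
    weakNormE 𝕜 r (fun _ : Fin 1 => y) ≤ ‖y‖ := by
  by_cases hrt : r = ∞
  · unfold weakNormE
    rw [if_pos hrt]
    exact ciSup_le fun j => le_refl _
  · have ht : 0 < r.toReal := ENNReal.toReal_pos (ne_of_gt hr) hrt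
    unfold weakNormE
    rw [if_neg hrt]
    haveI : Nonempty {φ : E →L[𝕜] 𝕜 // ‖φ‖ ≤ 1} := ⟨⟨0, by simp⟩⟩
    refine ciSup_le fun φ => ?_
    rw [Fin.sum_univ_one, ← Real.rpow_mul (norm_nonneg _), mul_one_div,
      div_self (ne_of_gt ht), Real.rpow_one]
    calc ‖φ.1 y‖ ≤ ‖φ.1‖ * ‖y‖ := ContinuousLinearMap.le_opNorm _ _
      _ ≤ 1 * ‖y‖ := mul_le_mul_of_nonneg_right φ.2 (norm_nonneg _)
      _ = ‖y‖ := one_mul _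

end weak

section keyfactor
variable {𝕜 : Type*} [RCLike 𝕜] {E : Type*} [NormedAddCommGroup E] [NormedSpace 𝕜 E]

private lemma key_factor {qi pi : ℝ≥0∞} (hqi0 : 0 < qi) (hqi : qi ≠ ∞) (hle : qi ≤ pi)
    {m : ℕ} (x : Fin m → E) (lam : Fin m → ℝ) (hlam : ∀ j, 0 ≤ lam j)
    {e : ℝ} (he : 0 < e) (hee : e = (qi⁻¹).toReal - (pi⁻¹).toReal) :
    weakNormE 𝕜 qi (fun j => ((lam j : ℝ) : 𝕜) • x j)
      ≤ (∑ j, lam j ^ (1 / e)) ^ e * weakNormE 𝕜 pi x := by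
  have hpi0 : 0 < pi := lt_of_lt_of_le hqi0 hle
  have hw : 0 < qi.toReal := ENNReal.toReal_pos (ne_of_gt hqi0) hqi
  set w := qi.toReal with hwdef
  unfold weakNormE
  rw [if_neg hqi]
  haveI : Nonempty {φ : E →L[𝕜] 𝕜 // ‖φ‖ ≤ 1} := ⟨⟨0, by simp⟩⟩
  refine ciSup_le fun φ => ?_
  have hterm : ∀ j, ‖φ.1 (((lam j : ℝ) : 𝕜) • x j)‖ = lam j * ‖φ.1 (x j)‖ := by
    intro j
    rw [map_smul, norm_smul, RCLike.norm_ofReal, abs_of_nonneg (hlam j)]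
  simp_rw [hterm]
  by_cases hpi : pi = ∞
  · have he' : e = 1 / w := by
      rw [hee, hpi]
      simp [ENNReal.toReal_inv, one_div]
      exact hwdef.symm
    have h1e : 1 / e = w := by rw [he', one_div_one_div]
    have hM : ∀ k, ‖x k‖ ≤ weakNormE 𝕜 pi x := fun k => norm_le_weakNormE x hpi0 k
    have hMn : 0 ≤ weakNormE 𝕜 pi x := weakNormE_nonneg x pi
    set M := weakNormE 𝕜 pi x
    have step1 : ∑ j, (lam j * ‖φ.1 (x j)‖) ^ w ≤ (∑ j, lam j ^ w) * M ^ w := by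
      rw [Finset.sum_mul]
      refine Finset.sum_le_sum fun j _ => ?_
      rw [← Real.mul_rpow (hlam j) hMn]
      refine Real.rpow_le_rpow (mul_nonneg (hlam j) (norm_nonneg _)) ?_ (le_of_lt hw)
      refine mul_le_mul_of_nonneg_left ?_ (hlam j)
      calc ‖φ.1 (x j)‖ ≤ ‖φ.1‖ * ‖x j‖ := ContinuousLinearMap.le_opNorm _ _
        _ ≤ 1 * ‖x j‖ := mul_le_mul_of_nonneg_right φ.2 (norm_nonneg _)
        _ = ‖x j‖ := one_mul _
        _ ≤ M := hM j
    calc (∑ j, (lam j * ‖φ.1 (x j)‖) ^ w) ^ (1 / w)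
        ≤ ((∑ j, lam j ^ w) * M ^ w) ^ (1 / w) :=
          Real.rpow_le_rpow (Finset.sum_nonneg fun j _ =>
            Real.rpow_nonneg (mul_nonneg (hlam j) (norm_nonneg _)) _) step1 (by positivity)
      _ = (∑ j, lam j ^ w) ^ (1 / w) * M := by
          rw [Real.mul_rpow (Finset.sum_nonneg fun j _ => Real.rpow_nonneg (hlam j) _)
            (Real.rpow_nonneg hMn _), ← Real.rpow_mul hMn, mul_one_div,
            div_self (ne_of_gt hw), Real.rpow_one]
      _ = (∑ j, lam j ^ (1 / e)) ^ e * M := by rw [h1e, he']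
  · have hv : 0 < pi.toReal := ENNReal.toReal_pos (ne_of_gt hpi0) hpi
    set v := pi.toReal with hvdef
    have hrel : 1 / w = 1 / (1 / e) + 1 / v := by
      rw [one_div_one_div, hee]
      rw [ENNReal.toReal_inv, ENNReal.toReal_inv]
      simp only [← hwdef, ← hvdef, one_div]
      ring
    have h1 := aux_holder lam (fun j => ‖φ.1 (x j)‖) hlam (fun j => norm_nonneg _)
      hw (by positivity : (0:ℝ) < 1 / e) hv hrel
    rw [one_div_one_div] at h1
    refine le_trans h1 ?_
    refine mul_le_mul_of_nonneg_left ?_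
      (Real.rpow_nonneg (Finset.sum_nonneg fun j _ => Real.rpow_nonneg (hlam j) _) _)
    exact term_le_weakNormE x hpi0 hpi φ.1 φ.2
end keyfactor

private lemma lpNormE_single {F : Type*} [NormedAddCommGroup F] {q : ℝ≥0∞} (hq : 0 < q)
    (y : F) : lpNormE q (fun _ : Fin 1 => y) = ‖y‖ := by
  unfold lpNormE
  split
  · exact ciSup_const
  · rename_i hq'
    have ht : 0 < q.toReal := ENNReal.toReal_pos (ne_of_gt hq) hq'
    rw [Fin.sum_univ_one, ← Real.rpow_mul (norm_nonneg _), mul_one_div,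
      div_self (ne_of_gt ht), Real.rpow_one]

private lemma enn_eq_of_toReal_inv_eq {qi pi : ℝ≥0∞} (h0 : 0 < qi) (hle : qi ≤ pi)
    (h : (qi⁻¹).toReal = (pi⁻¹).toReal) : qi = pi := by
  have h1 : qi⁻¹ ≠ ∞ := ENNReal.inv_ne_top.2 (ne_of_gt h0)
  have h2 : pi⁻¹ ≠ ∞ := ENNReal.inv_ne_top.2 (ne_of_gt (lt_of_lt_of_le h0 hle))
  have h3 : qi⁻¹ = pi⁻¹ := (ENNReal.toReal_eq_toReal_iff' h1 h2).1 h
  calc qi = qi⁻¹⁻¹ := (inv_inv _).symm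
    _ = pi⁻¹⁻¹ := by rw [h3]
    _ = pi := inv_inv _


/-- **Inclusion Theorem.** If `0 < q ≤ p ≤ ∞`, `0 < q_j ≤ p_j ≤ ∞` for all `j`,
`1/q ≤ ∑_j 1/q_j` and `∑_j 1/q_j − 1/q ≤ ∑_j 1/p_j − 1/p` (stated additively to avoid
truncated subtraction), then every absolutely `(q; q₁, …, qₙ)`-summing multilinear map is
absolutely `(p; p₁, …, pₙ)`-summing with `π_{(p;p₁,…,pₙ)}(A) ≤ π_{(q;q₁,…,qₙ)}(A)`:
any summing constant for the former works for the latter. -/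
theorem inclusion_theorem {𝕜 : Type*} [RCLike 𝕜] {n : ℕ}
    (E : Fin n → Type*) [∀ i, NormedAddCommGroup (E i)] [∀ i, NormedSpace 𝕜 (E i)]
    [∀ i, CompleteSpace (E i)]
    (F : Type*) [NormedAddCommGroup F] [NormedSpace 𝕜 F] [CompleteSpace F]
    (p q : ℝ≥0∞) (ps qs : Fin n → ℝ≥0∞)
    (hq : 0 < q) (hqp : q ≤ p)
    (hqs : ∀ i, 0 < qs i) (hqps : ∀ i, qs i ≤ ps i)
    (hql : 1 / q ≤ ∑ i, 1 / qs i)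
    (hmain : (∑ i, 1 / qs i) + 1 / p ≤ (∑ i, 1 / ps i) + 1 / q)
    (A : ContinuousMultilinearMap 𝕜 E F) (C : ℝ) (hC : 0 < C)
    (hA : ∀ (m : ℕ) (x : ∀ i, Fin m → E i),
      lpNormE q (fun j => A (fun i => x i j)) ≤ C * ∏ i, weakNormE 𝕜 (qs i) (x i)) :
    ∀ (m : ℕ) (x : ∀ i, Fin m → E i),
      lpNormE p (fun j => A (fun i => x i j)) ≤ C * ∏ i, weakNormE 𝕜 (ps i) (x i) := by
  have hps : ∀ i, 0 < ps i := fun i => lt_of_lt_of_le (hqs i) (hqps i)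
  intro m x
  have hPn : ∀ i, 0 ≤ weakNormE 𝕜 (ps i) (x i) := fun i => weakNormE_nonneg _ _
  have hProd : 0 ≤ ∏ i, weakNormE 𝕜 (ps i) (x i) := Finset.prod_nonneg fun i _ => hPn i
  set s : Fin m → ℝ := fun j => ‖A (fun i => x i j)‖ with hsdef
  have hs0 : ∀ j, 0 ≤ s j := fun j => norm_nonneg _
  by_cases hp : p = ∞
  · -- case p = ∞ : pointwise estimate via one-point families
    have hptwise : ∀ j, s j ≤ C * ∏ i, weakNormE 𝕜 (ps i) (x i) := by
      intro j
      have h1 := hA 1 (fun i _ => x i j)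
      rw [lpNormE_single hq] at h1
      refine le_trans h1 ?_
      refine mul_le_mul_of_nonneg_left ?_ (le_of_lt hC)
      refine Finset.prod_le_prod (fun i _ => weakNormE_nonneg _ _) fun i _ => ?_
      calc weakNormE 𝕜 (qs i) (fun _ : Fin 1 => x i j) ≤ ‖x i j‖ :=
            weakNormE_single_le (hqs i) _
        _ ≤ weakNormE 𝕜 (ps i) (x i) := norm_le_weakNormE _ (hps i) j
    show lpNormE p (fun j => A (fun i => x i j)) ≤ _
    unfold lpNormE
    rw [if_pos hp]
    rcases Nat.eq_zero_or_pos m with rfl | hm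
    · rw [Real.iSup_of_isEmpty]
      exact mul_nonneg (le_of_lt hC) hProd
    · haveI : Nonempty (Fin m) := Fin.pos_iff_nonempty.1 hm
      exact ciSup_le hptwise
  · -- case p ≠ ∞
    have hq' : q ≠ ∞ := fun h => hp (top_le_iff.1 (h ▸ hqp))
    have hpt : 0 < p.toReal := ENNReal.toReal_pos (ne_of_gt (lt_of_lt_of_le hq hqp)) hp
    have hqt : 0 < q.toReal := ENNReal.toReal_pos (ne_of_gt hq) hq'
    have hqtpt : q.toReal ≤ p.toReal := (ENNReal.toReal_le_toReal hq' hp).2 hqp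
    set bi : Fin n → ℝ := fun i => ((qs i)⁻¹).toReal with hbidef
    set ci : Fin n → ℝ := fun i => ((ps i)⁻¹).toReal with hcidef
    have hbi0 : ∀ i, 0 ≤ bi i := fun i => ENNReal.toReal_nonneg
    have hci0 : ∀ i, 0 ≤ ci i := fun i => ENNReal.toReal_nonneg
    have hcb : ∀ i, ci i ≤ bi i := fun i =>
      ENNReal.toReal_mono (ENNReal.inv_ne_top.2 (ne_of_gt (hqs i)))
        (ENNReal.inv_le_inv.2 (hqps i))
    set ir : ℝ := 1 / q.toReal - 1 / p.toReal with hirdef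
    have hir0 : 0 ≤ ir := by
      have := one_div_le_one_div_of_le hqt hqtpt
      simp only [hirdef]; linarith
    set ei : Fin n → ℝ := fun i => bi i - ci i with heidef
    have hei0 : ∀ i, 0 ≤ ei i := fun i => sub_nonneg.2 (hcb i)
    set σ : ℝ := ∑ i, ei i with hσdef
    have hσ0 : 0 ≤ σ := Finset.sum_nonneg fun i _ => hei0 i
    -- convert hmain to a real inequality
    have hfin1 : ∀ i ∈ Finset.univ, (1 : ℝ≥0∞) / qs i ≠ ∞ := fun i _ => by
      rw [one_div]; exact ENNReal.inv_ne_top.2 (ne_of_gt (hqs i))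
    have hfin2 : ∀ i ∈ Finset.univ, (1 : ℝ≥0∞) / ps i ≠ ∞ := fun i _ => by
      rw [one_div]; exact ENNReal.inv_ne_top.2 (ne_of_gt (hps i))
    have hsum1 : (∑ i, 1 / qs i) ≠ ∞ := by
      rw [← lt_top_iff_ne_top, ENNReal.sum_lt_top]
      exact fun i _ => lt_top_iff_ne_top.2 (hfin1 i (Finset.mem_univ i))
    have hsum2 : (∑ i, 1 / ps i) ≠ ∞ := by
      rw [← lt_top_iff_ne_top, ENNReal.sum_lt_top]
      exact fun i _ => lt_top_iff_ne_top.2 (hfin2 i (Finset.mem_univ i))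
    have hp1 : (1 : ℝ≥0∞) / p ≠ ∞ := by
      rw [one_div]; exact ENNReal.inv_ne_top.2 (ne_of_gt (lt_of_lt_of_le hq hqp))
    have hq1 : (1 : ℝ≥0∞) / q ≠ ∞ := by
      rw [one_div]; exact ENNReal.inv_ne_top.2 (ne_of_gt hq)
    have hmainR : (∑ i, bi i) + 1 / p.toReal ≤ (∑ i, ci i) + 1 / q.toReal := by
      have h1 := (ENNReal.toReal_le_toReal (by exact ENNReal.add_ne_top.2 ⟨hsum1, hp1⟩)
        (by exact ENNReal.add_ne_top.2 ⟨hsum2, hq1⟩)).2 hmain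
      rw [ENNReal.toReal_add hsum1 hp1, ENNReal.toReal_add hsum2 hq1,
        ENNReal.toReal_sum hfin1, ENNReal.toReal_sum hfin2] at h1
      simp only [one_div, ENNReal.toReal_inv] at h1
      simp only [hbidef, hcidef, one_div, ENNReal.toReal_inv]
      exact h1
    have hσir : σ ≤ ir := by
      have h2 : σ = (∑ i, bi i) - (∑ i, ci i) := by
        rw [hσdef, heidef, Finset.sum_sub_distrib]
      rw [h2, hirdef]; linarith
    rcases eq_or_lt_of_le hσ0 with hσz | hσpos
    · -- σ = 0 : all exponents coincide, use monotonicity of ℓ_p norms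
      have heiz : ∀ i, ei i = 0 := fun i =>
        (Finset.sum_eq_zero_iff_of_nonneg (fun i _ => hei0 i)).1 hσz.symm i (Finset.mem_univ i)
      have hqsps : ∀ i, qs i = ps i := by
        intro i
        refine enn_eq_of_toReal_inv_eq (hqs i) (hqps i) ?_
        have h1 := heiz i
        simp only [heidef] at h1
        have : bi i = ci i := by linarith [sub_eq_zero.1 h1]
        exact this
      have h1 := hA m x
      have h2 : (∏ i, weakNormE 𝕜 (qs i) (x i)) = ∏ i, weakNormE 𝕜 (ps i) (x i) :=
        Finset.prod_congr rfl fun i _ => by rw [hqsps i]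
      rw [h2] at h1
      refine le_trans ?_ h1
      show lpNormE p _ ≤ lpNormE q _
      unfold lpNormE
      rw [if_neg hp, if_neg hq']
      exact aux_lp_mono s hs0 hqt hqtpt
    · -- σ > 0 : the scaling argument
      set S : ℝ := ∑ j, s j ^ p.toReal with hSdef
      have hS0 : 0 ≤ S :=
        Finset.sum_nonneg fun j _ => Real.rpow_nonneg (hs0 j) _
      have hgoalL : lpNormE p (fun j => A fun i => x i j) = S ^ (1 / p.toReal) := by
        unfold lpNormE; rw [if_neg hp]
      rw [hgoalL]
      rcases eq_or_lt_of_le hS0 with hSz | hSpos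
      · rw [← hSz, Real.zero_rpow (ne_of_gt (one_div_pos.2 hpt))]
        exact mul_nonneg (le_of_lt hC) hProd
      · obtain ⟨j0, hj0⟩ : ∃ j, 0 < s j := by
          by_contra hcon
          push_neg at hcon
          have hz : S = 0 := by
            rw [hSdef]
            refine Finset.sum_eq_zero fun j _ => ?_
            rw [le_antisymm (hcon j) (hs0 j), Real.zero_rpow (ne_of_gt hpt)]
          rw [hz] at hSpos; exact lt_irrefl 0 hSpos
        set t : Fin m → ℝ := fun j => s j ^ (p.toReal * ir) with htdef
        have ht0 : ∀ j, 0 ≤ t j := fun j => Real.rpow_nonneg (hs0 j) _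
        have htj0 : 0 < t j0 := Real.rpow_pos_of_pos hj0 _
        set T : ℝ := ∑ j, t j ^ (1 / σ) with hTdef
        have hT0 : 0 < T :=
          lt_of_lt_of_le (Real.rpow_pos_of_pos htj0 _)
            (Finset.single_le_sum (fun j _ => Real.rpow_nonneg (ht0 j) _) (Finset.mem_univ j0))
        set lam : Fin n → Fin m → ℝ := fun i j => t j ^ (ei i / σ) with hlamdef
        have hlam0 : ∀ i j, 0 ≤ lam i j := fun i j => Real.rpow_nonneg (ht0 j) _
        set y : ∀ i, Fin m → E i := fun i j => ((lam i j : ℝ) : 𝕜) • x i j with hydef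
        have happ := hA m y
        -- compute the norms of the scaled values
        have hnorm : ∀ j, ‖A fun i => y i j‖ = t j * s j := by
          intro j
          have h1 : A (fun i => y i j) = (∏ i, ((lam i j : ℝ) : 𝕜)) • A (fun i => x i j) :=
            A.map_smul_univ _ _
          rw [h1, norm_smul]
          have h2 : ‖∏ i, ((lam i j : ℝ) : 𝕜)‖ = ∏ i, lam i j := by
            rw [← RCLike.ofReal_prod, RCLike.norm_ofReal,
              abs_of_nonneg (Finset.prod_nonneg fun i _ => hlam0 i j)]
          rw [h2]
          rcases eq_or_lt_of_le (hs0 j) with hz | hz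
          · show (∏ i, lam i j) * s j = t j * s j
            rw [← hz, mul_zero, mul_zero]
          · have htj : 0 < t j := Real.rpow_pos_of_pos hz _
            have h3 : (∏ i, lam i j) = t j := by
              simp only [hlamdef]
              rw [← Real.rpow_sum_of_pos htj, ← Finset.sum_div, ← hσdef,
                div_self (ne_of_gt hσpos), Real.rpow_one]
            rw [h3]
        -- the left-hand side of the summing inequality
        have hts : ∀ j, (t j * s j) ^ q.toReal = s j ^ p.toReal := by
          intro j
          rcases eq_or_lt_of_le (hs0 j) with hz | hz
          · rw [← hz, mul_zero, Real.zero_rpow (ne_of_gt hqt), Real.zero_rpow (ne_of_gt hpt)]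
          · have e1 : t j * s j = s j ^ (p.toReal * ir + 1) := by
              rw [htdef, Real.rpow_add_one (ne_of_gt hz)]
            rw [e1, ← Real.rpow_mul (hs0 j)]
            congr 1
            rw [hirdef]
            field_simp
            ring
        have hLHS : lpNormE q (fun j => A fun i => y i j) = S ^ (1 / q.toReal) := by
          unfold lpNormE
          rw [if_neg hq']
          congr 1
          rw [hSdef]
          refine Finset.sum_congr rfl fun j _ => ?_
          rw [hnorm j, hts j]
        rw [hLHS] at happ
        -- bound each weak norm factor
        have hfac : ∀ i, weakNormE 𝕜 (qs i) (y i) ≤ T ^ ei i * weakNormE 𝕜 (ps i) (x i) := by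
          intro i
          rcases eq_or_lt_of_le (hei0 i) with hez | hez
          · -- e_i = 0 : the scalars are 1 and qs i = ps i
            have hqsps : qs i = ps i := by
              refine enn_eq_of_toReal_inv_eq (hqs i) (hqps i) ?_
              have h1 : bi i - ci i = 0 := hez.symm
              have : bi i = ci i := by linarith [sub_eq_zero.1 h1]
              exact this
            have hyx : y i = x i := by
              funext j
              simp only [hydef, hlamdef, ← hez, zero_div, Real.rpow_zero]
              norm_num
            rw [hyx, ← hez, Real.rpow_zero, one_mul, hqsps]
          · -- e_i > 0 : use the Hölder estimate
            have hqine : qs i ≠ ∞ := by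
              intro hcon
              have : bi i = 0 := by simp [hbidef, hcon]
              have := hcb i
              have := hci0 i
              simp only [heidef] at hez
              linarith
            have h1 := key_factor (𝕜 := 𝕜) (hqs i) hqine (hqps i) (x i) (lam i)
              (hlam0 i) hez (rfl : ei i = bi i - ci i)
            have h2 : (∑ j, lam i j ^ (1 / ei i)) = T := by
              rw [hTdef]
              refine Finset.sum_congr rfl fun j _ => ?_
              rw [hlamdef]
              rw [← Real.rpow_mul (ht0 j)]
              congr 1
              field_simp
            rw [h2] at h1
            exact h1
        -- combine
        have hfac2 : (∏ i, weakNormE 𝕜 (qs i) (y i))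
            ≤ T ^ σ * ∏ i, weakNormE 𝕜 (ps i) (x i) := by
          calc (∏ i, weakNormE 𝕜 (qs i) (y i))
              ≤ ∏ i, (T ^ ei i * weakNormE 𝕜 (ps i) (x i)) :=
                Finset.prod_le_prod (fun i _ => weakNormE_nonneg _ _) fun i _ => hfac i
            _ = (∏ i, T ^ ei i) * ∏ i, weakNormE 𝕜 (ps i) (x i) := Finset.prod_mul_distrib
            _ = T ^ σ * ∏ i, weakNormE 𝕜 (ps i) (x i) := by
                rw [hσdef, Real.rpow_sum_of_pos hT0]
        -- dominate T ^ σ by S ^ ir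
        have hirpos : 0 < ir := lt_of_lt_of_le hσpos hσir
        have hTS : T ^ σ ≤ S ^ ir := by
          have hη : 0 < p.toReal * ir / σ := by positivity
          have hple : p.toReal ≤ p.toReal * ir / σ := by
            rw [le_div_iff₀ hσpos]
            calc p.toReal * σ ≤ p.toReal * ir :=
                  mul_le_mul_of_nonneg_left hσir (le_of_lt hpt)
              _ = p.toReal * ir := rfl
          have hTeq : T = ∑ j, s j ^ (p.toReal * ir / σ) := by
            rw [hTdef]
            refine Finset.sum_congr rfl fun j _ => ?_
            rw [htdef, ← Real.rpow_mul (hs0 j)]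
            congr 1
            field_simp
          have hmono := aux_lp_mono s hs0 hpt hple
          rw [← hTeq, ← hSdef] at hmono
          -- hmono : T ^ (1 / (p.toReal * ir / σ)) ≤ S ^ (1 / p.toReal)
          have h5 : T ^ σ = (T ^ (1 / (p.toReal * ir / σ))) ^ (p.toReal * ir) := by
            rw [← Real.rpow_mul (le_of_lt hT0)]
            congr 1
            field_simp
          rw [h5]
          calc (T ^ (1 / (p.toReal * ir / σ))) ^ (p.toReal * ir)
              ≤ (S ^ (1 / p.toReal)) ^ (p.toReal * ir) :=
                Real.rpow_le_rpow (Real.rpow_nonneg (le_of_lt hT0) _) hmono (by positivity)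
            _ = S ^ ir := by
                rw [← Real.rpow_mul hS0]
                congr 1
                field_simp
        -- final computation
        have hfinal : S ^ (1 / q.toReal) ≤ C * (S ^ ir * ∏ i, weakNormE 𝕜 (ps i) (x i)) := by
          calc S ^ (1 / q.toReal) ≤ C * ∏ i, weakNormE 𝕜 (qs i) (y i) := happ
            _ ≤ C * (T ^ σ * ∏ i, weakNormE 𝕜 (ps i) (x i)) :=
                mul_le_mul_of_nonneg_left hfac2 (le_of_lt hC)
            _ ≤ C * (S ^ ir * ∏ i, weakNormE 𝕜 (ps i) (x i)) := by
                refine mul_le_mul_of_nonneg_left ?_ (le_of_lt hC)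
                exact mul_le_mul_of_nonneg_right hTS hProd
        have hsplit : S ^ (1 / q.toReal) = S ^ (1 / p.toReal) * S ^ ir := by
          rw [← Real.rpow_add hSpos]
          congr 1
          rw [hirdef]; ring
        rw [hsplit] at hfinal
        have hSir : 0 < S ^ ir := Real.rpow_pos_of_pos hSpos _
        -- cancel S ^ ir
        have h6 : S ^ (1 / p.toReal) * S ^ ir
            ≤ (C * ∏ i, weakNormE 𝕜 (ps i) (x i)) * S ^ ir := by
          calc S ^ (1 / p.toReal) * S ^ ir
              ≤ C * (S ^ ir * ∏ i, weakNormE 𝕜 (ps i) (x i)) := hfinal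
            _ = (C * ∏ i, weakNormE 𝕜 (ps i) (x i)) * S ^ ir := by ring
        exact le_of_mul_le_mul_right h6 hSir
end

section
/- Let n ≥ 2 and let E_1, …, E_n be Banach spaces such that E_3', …, E_n' have the Littlewood–Orlicz property and every continuous bilinear form on E_1 × E_2 is 2-dominated (i.e. absolutely (1;2,2)-summing). Then every continuous n-linear form A : E_1 × ⋯ × E_n → 𝕂 is absolutely (1;2,…,2)-summing. -/
open scoped BigOperators NNReal ENNReal

/-- The weak `ℓ_r` norm of a finite family `(x_j)` in a normed space:
`sup_{‖φ‖ ≤ 1} (∑_j ‖φ(x_j)‖^r)^(1/r)`. -/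
noncomputable def weakNorm (𝕜 : Type*) [RCLike 𝕜] {E : Type*} [NormedAddCommGroup E]
    [NormedSpace 𝕜 E] (r : ℝ) {m : ℕ} (x : Fin m → E) : ℝ :=
  ⨆ φ : {φ : E →L[𝕜] 𝕜 // ‖φ‖ ≤ 1}, (∑ j, ‖φ.1 (x j)‖ ^ r) ^ (1 / r)

/-- A Banach space `X` has the Littlewood–Orlicz property: `ℓ₁ʷ(X)` embeds continuously into
`ℓ₂ ⊗_π X = ℓ₂⟨X⟩`, expressed through the Bu–Diestel duality characterization:
`∑_j |ψ_j(x_j)| ≤ C ‖(x_j)‖_{ℓ₁ʷ(X)} ‖(ψ_j)‖_{ℓ₂ʷ(X')}` for all finite families. -/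
def LittlewoodOrlicz (𝕜 : Type*) [RCLike 𝕜] (X : Type*) [NormedAddCommGroup X]
    [NormedSpace 𝕜 X] : Prop :=
  ∃ C > 0, ∀ (m : ℕ) (x : Fin m → X) (ψ : Fin m → (X →L[𝕜] 𝕜)),
    ∑ j, ‖ψ j (x j)‖ ≤ C * weakNorm 𝕜 1 x * weakNorm 𝕜 2 ψ

/-- The Rademacher norm of a finite family `(x_j)_{j=1}^m` in a normed space:
`(2^{-m} ∑_{ε ∈ {-1,1}^m} ‖∑_j ε_j x_j‖²)^{1/2}`. -/
noncomputable def radNorm {E : Type*} [NormedAddCommGroup E] {m : ℕ} (x : Fin m → E) : ℝ :=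
  ((∑ ε : Fin m → Bool, ‖∑ j, (if ε j then x j else -x j)‖ ^ 2) / (2 : ℝ) ^ m) ^ ((1 : ℝ) / 2)

/-- A continuous multilinear map is absolutely `(p; p₁, …, pₙ)`-summing. -/
def IsAbsSumming {𝕜 : Type*} [RCLike 𝕜] {n : ℕ} {E : Fin n → Type*}
    [∀ i, NormedAddCommGroup (E i)] [∀ i, NormedSpace 𝕜 (E i)]
    {F : Type*} [NormedAddCommGroup F] [NormedSpace 𝕜 F]
    (p : ℝ) (ps : Fin n → ℝ) (A : ContinuousMultilinearMap 𝕜 E F) : Prop :=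
  ∃ C > 0, ∀ (m : ℕ) (x : ∀ i, Fin m → E i),
    (∑ j, ‖A (fun i => x i j)‖ ^ p) ^ (1 / p) ≤ C * ∏ i, weakNorm 𝕜 (ps i) (x i)

section helpers
variable {𝕜 : Type*} [RCLike 𝕜] {E : Type*} [NormedAddCommGroup E] [NormedSpace 𝕜 E] {m : ℕ}

instance : Nonempty {φ : E →L[𝕜] 𝕜 // ‖φ‖ ≤ 1} := ⟨⟨0, by simp⟩⟩

lemma weakNorm_bddAbove {r : ℝ} (hr : 0 < r) (x : Fin m → E) :
    BddAbove (Set.range fun φ : {φ : E →L[𝕜] 𝕜 // ‖φ‖ ≤ 1} =>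
      (∑ j, ‖φ.1 (x j)‖ ^ r) ^ (1 / r)) := by
  refine ⟨(∑ j, ‖x j‖ ^ r) ^ (1 / r), ?_⟩
  rintro _ ⟨φ, rfl⟩
  refine Real.rpow_le_rpow (Finset.sum_nonneg fun j _ => Real.rpow_nonneg (norm_nonneg _) r)
    (Finset.sum_le_sum fun j _ => Real.rpow_le_rpow (norm_nonneg _) ?_ hr.le) (by positivity)
  calc ‖φ.1 (x j)‖ ≤ ‖φ.1‖ * ‖x j‖ := φ.1.le_opNorm _
  _ ≤ 1 * ‖x j‖ := mul_le_mul_of_nonneg_right φ.2 (norm_nonneg _)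
  _ = ‖x j‖ := one_mul _

lemma le_weakNorm {r : ℝ} (hr : 0 < r) (x : Fin m → E) (φ : E →L[𝕜] 𝕜) (hφ : ‖φ‖ ≤ 1) :
    (∑ j, ‖φ (x j)‖ ^ r) ^ (1 / r) ≤ weakNorm 𝕜 r x :=
  le_ciSup (weakNorm_bddAbove hr x) (⟨φ, hφ⟩ : {φ : E →L[𝕜] 𝕜 // ‖φ‖ ≤ 1})

lemma weakNorm_nonneg (r : ℝ) (x : Fin m → E) : 0 ≤ weakNorm 𝕜 r x :=
  Real.iSup_nonneg fun _ => Real.rpow_nonneg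
    (Finset.sum_nonneg fun j _ => Real.rpow_nonneg (norm_nonneg _) r) _

lemma weakNorm_le {r : ℝ} {x : Fin m → E} {M : ℝ}
    (h : ∀ φ : E →L[𝕜] 𝕜, ‖φ‖ ≤ 1 → (∑ j, ‖φ (x j)‖ ^ r) ^ (1 / r) ≤ M) :
    weakNorm 𝕜 r x ≤ M :=
  ciSup_le fun φ => h φ.1 φ.2

lemma sum_le_weakNorm_one (x : Fin m → E) (φ : E →L[𝕜] 𝕜) (hφ : ‖φ‖ ≤ 1) :
    ∑ j, ‖φ (x j)‖ ≤ weakNorm 𝕜 1 x := by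
  simpa [Real.rpow_one] using le_weakNorm one_pos x φ hφ

lemma weakNorm_one_le {x : Fin m → E} {M : ℝ}
    (h : ∀ φ : E →L[𝕜] 𝕜, ‖φ‖ ≤ 1 → ∑ j, ‖φ (x j)‖ ≤ M) :
    weakNorm 𝕜 1 x ≤ M :=
  weakNorm_le fun φ hφ => by simpa [Real.rpow_one] using h φ hφ

lemma weakNorm_le_of_transfer {F : Type*} [NormedAddCommGroup F] [NormedSpace 𝕜 F]
    {r : ℝ} (hr : 0 < r) {ψ : Fin m → F} {x : Fin m → E}
    (h : ∀ φ : F →L[𝕜] 𝕜, ‖φ‖ ≤ 1 → ∃ ρ : E →L[𝕜] 𝕜, ‖ρ‖ ≤ 1 ∧ ∀ j, ‖φ (ψ j)‖ = ‖ρ (x j)‖) :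
    weakNorm 𝕜 r ψ ≤ weakNorm 𝕜 r x := by
  refine weakNorm_le fun φ hφ => ?_
  obtain ⟨ρ, hρ, he⟩ := h φ hφ
  calc (∑ j, ‖φ (ψ j)‖ ^ r) ^ (1 / r) = (∑ j, ‖ρ (x j)‖ ^ r) ^ (1 / r) := by simp_rw [he]
  _ ≤ _ := le_weakNorm hr x ρ hρ

end helpers

universe u

set_option maxHeartbeats 1000000
set_option synthInstance.maxHeartbeats 400000


lemma baire_uniform {𝕜 : Type*} [RCLike 𝕜] {W : Type*} [NormedAddCommGroup W]
    [NormedSpace 𝕜 W] [CompleteSpace W] {ι : Type*} (f : ι → W → ℝ) (P : ι → ℝ)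
    (hPnn : ∀ i, 0 ≤ P i)
    (hcont : ∀ i, Continuous (f i))
    (hadd : ∀ i w w', f i (w + w') ≤ f i w + f i w')
    (hsmul : ∀ i (a : 𝕜) w, f i (a • w) = ‖a‖ * f i w)
    (hpt : ∀ w, ∃ C, ∀ i, f i w ≤ C * P i) :
    ∃ K : ℝ, 0 ≤ K ∧ ∀ w i, f i w ≤ K * ‖w‖ * P i := by
  have hf0 : ∀ i, f i 0 = 0 := by
    intro i
    have := hsmul i 0 0
    simpa using this
  set S : ℕ → Set W := fun k => {w | ∀ i, f i w ≤ (k : ℝ) * ‖w‖ * P i} with hS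
  have hSclosed : ∀ k, IsClosed (S k) := by
    intro k
    have hrw : S k = ⋂ i, {w : W | f i w ≤ (k : ℝ) * ‖w‖ * P i} := by
      ext w; simp [hS, Set.mem_iInter]
    rw [hrw]
    exact isClosed_iInter fun i => isClosed_le (hcont i)
      ((continuous_const.mul continuous_norm).mul continuous_const)
  have hScover : ⋃ k, S k = Set.univ := by
    refine Set.eq_univ_iff_forall.mpr fun w => Set.mem_iUnion.mpr ?_
    obtain ⟨C, hC⟩ := hpt w
    by_cases hw : w = 0
    · refine ⟨0, fun i => ?_⟩
      rw [hw, hf0 i]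
      simp
    · have hwn : 0 < ‖w‖ := norm_pos_iff.mpr hw
      refine ⟨⌈C / ‖w‖⌉₊, fun i => ?_⟩
      have hCk : C ≤ (⌈C / ‖w‖⌉₊ : ℝ) * ‖w‖ := by
        rw [← div_le_iff₀ hwn]; exact Nat.le_ceil _
      calc f i w ≤ C * P i := hC i
      _ ≤ (⌈C / ‖w‖⌉₊ : ℝ) * ‖w‖ * P i := mul_le_mul_of_nonneg_right hCk (hPnn i)
  obtain ⟨k, w0, hw0mem⟩ := nonempty_interior_of_iUnion_of_closed hSclosed hScover
  obtain ⟨δ, hδpos, hball⟩ := Metric.isOpen_iff.mp isOpen_interior w0 hw0mem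
  have hball' : Metric.ball w0 δ ⊆ S k := hball.trans interior_subset
  have hmem0 : w0 ∈ S k := hball' (Metric.mem_ball_self hδpos)
  refine ⟨2 * k * (2 * ‖w0‖ + δ) / δ, by positivity, fun w i => ?_⟩
  by_cases hw : w = 0
  · rw [hw, hf0 i]
    have : (0:ℝ) ≤ 2 * k * (2 * ‖w0‖ + δ) / δ * ‖(0 : W)‖ * P i := by
      have := hPnn i; positivity
    exact this
  · have hwn : 0 < ‖w‖ := norm_pos_iff.mpr hw
    set c : ℝ := δ / (2 * ‖w‖) with hc
    have hcpos : 0 < c := by positivity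
    set θ : W := (c : 𝕜) • w with hθ
    have hθnorm : ‖θ‖ = δ / 2 := by
      rw [hθ, norm_smul, RCLike.norm_ofReal, abs_of_pos hcpos, hc]
      field_simp
    have hmem1 : w0 + θ ∈ S k := by
      refine hball' ?_
      rw [Metric.mem_ball, dist_eq_norm]
      simp only [add_sub_cancel_left]
      rw [hθnorm]; linarith
    have h1 := hmem1 i
    have h0 := hmem0 i
    have hk0 : (0:ℝ) ≤ (k : ℝ) := Nat.cast_nonneg k
    have hP := hPnn i
    have htri : ‖w0 + θ‖ ≤ ‖w0‖ + δ / 2 := by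
      calc ‖w0 + θ‖ ≤ ‖w0‖ + ‖θ‖ := norm_add_le _ _
      _ = ‖w0‖ + δ / 2 := by rw [hθnorm]
    have hneg : f i (-w0) = f i w0 := by
      have := hsmul i (-1) w0
      simpa using this
    have hθbound : f i θ ≤ (k : ℝ) * (2 * ‖w0‖ + δ) * P i := by
      have hsplit : f i θ ≤ f i (w0 + θ) + f i w0 := by
        calc f i θ = f i ((w0 + θ) + (-w0)) := by congr 1; abel
        _ ≤ f i (w0 + θ) + f i (-w0) := hadd i _ _
        _ = f i (w0 + θ) + f i w0 := by rw [hneg]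
      calc f i θ ≤ f i (w0 + θ) + f i w0 := hsplit
      _ ≤ (k : ℝ) * ‖w0 + θ‖ * P i + (k : ℝ) * ‖w0‖ * P i := add_le_add h1 h0
      _ ≤ (k : ℝ) * (2 * ‖w0‖ + δ) * P i := by nlinarith [mul_nonneg hk0 hP]
    have hθval : f i θ = c * f i w := by
      rw [hθ, hsmul i, RCLike.norm_ofReal, abs_of_pos hcpos]
    rw [hθval] at hθbound
    have : f i w ≤ c⁻¹ * ((k : ℝ) * (2 * ‖w0‖ + δ) * P i) := by
      have h2 : f i w ≤ ((k : ℝ) * (2 * ‖w0‖ + δ) * P i) / c := (le_div_iff₀' hcpos).mpr hθbound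
      rw [div_eq_inv_mul] at h2
      exact h2
    calc f i w ≤ c⁻¹ * ((k : ℝ) * (2 * ‖w0‖ + δ) * P i) := this
    _ = 2 * k * (2 * ‖w0‖ + δ) / δ * ‖w‖ * P i := by
        rw [hc]; field_simp

theorem step_lemma {𝕜 : Type*} [RCLike 𝕜] {n : ℕ} (hn : 2 ≤ n) (E : Fin (n + 1) → Type u)
    [∀ i, NormedAddCommGroup (E i)] [∀ i, NormedSpace 𝕜 (E i)]
    (hLO : ∀ i : Fin (n + 1), 2 ≤ i.val → LittlewoodOrlicz 𝕜 (E i →L[𝕜] 𝕜))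
    (ih : ∀ A' : ContinuousMultilinearMap 𝕜 (fun i : Fin n => E i.castSucc) 𝕜,
      ∃ C > 0, ∀ (m : ℕ) (y : ∀ i : Fin n, Fin m → E i.castSucc),
        ∑ j, ‖A' (fun i => y i j)‖ ≤ C * ∏ i, weakNorm 𝕜 2 (y i))
    (A : ContinuousMultilinearMap 𝕜 E 𝕜) :
    ∃ C > 0, ∀ (m : ℕ) (x : ∀ i, Fin m → E i),
      ∑ j, ‖A (fun i => x i j)‖ ≤ C * ∏ i, weakNorm 𝕜 2 (x i) := by
  classical
  set G := A.curryRight with hG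
  obtain ⟨K, hKnn, huniform⟩ := baire_uniform (𝕜 := 𝕜)
    (W := (E (Fin.last n) →L[𝕜] 𝕜) →L[𝕜] 𝕜)
    (ι := Σ m : ℕ, ∀ i : Fin n, Fin m → E i.castSucc)
    (fun p Ξ => ∑ j, ‖Ξ (G (fun i => p.2 i j))‖)
    (fun p => ∏ i, weakNorm 𝕜 2 (p.2 i))
    (fun p => Finset.prod_nonneg fun i _ => weakNorm_nonneg _ _)
    (fun p => by
      have hc : ∀ j : Fin p.1,
          Continuous fun Ξ : (E (Fin.last n) →L[𝕜] 𝕜) →L[𝕜] 𝕜 =>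
            ‖Ξ (G (fun i => p.2 i j))‖ :=
        fun j => ((ContinuousLinearMap.apply 𝕜 𝕜 (G (fun i => p.2 i j))).continuous).norm
      exact continuous_finset_sum _ fun j _ => hc j)
    (fun p Ξ Ξ' => by
      refine (Finset.sum_le_sum fun j _ => ?_).trans (le_of_eq Finset.sum_add_distrib)
      rw [ContinuousLinearMap.add_apply]
      exact norm_add_le _ _)
    (fun p a Ξ => by
      rw [Finset.mul_sum]
      refine Finset.sum_congr rfl fun j _ => ?_
      rw [ContinuousLinearMap.smul_apply, norm_smul])
    (fun Ξ => by
      obtain ⟨C, hC, hA'⟩ := ih (Ξ.compContinuousMultilinearMap G)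
      exact ⟨C, fun p => hA' p.1 p.2⟩)
  obtain ⟨CL, hCLpos, hLOineq⟩ := hLO (Fin.last n) hn
  refine ⟨CL * (K + 1), by positivity, fun m x => ?_⟩
  set y : ∀ i : Fin n, Fin m → E i.castSucc := fun i => x i.castSucc with hy
  set v : Fin m → (E (Fin.last n) →L[𝕜] 𝕜) := fun j => G (fun i => y i j) with hv
  set Φ : Fin m → ((E (Fin.last n) →L[𝕜] 𝕜) →L[𝕜] 𝕜) :=
    fun j => ContinuousLinearMap.apply 𝕜 𝕜 (x (Fin.last n) j) with hΦ
  have hProdNonneg : (0:ℝ) ≤ ∏ i, weakNorm 𝕜 2 (y i) :=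
    Finset.prod_nonneg fun i _ => weakNorm_nonneg _ _
  have hPhi : ∀ j, Φ j (v j) = A (fun i => x i j) := by
    intro j
    show (G (fun i => y i j)) (x (Fin.last n) j) = A (fun i => x i j)
    rw [hG, ContinuousMultilinearMap.curryRight_apply]
    exact congrArg A (Fin.snoc_init_self fun i => x i j)
  have hw1 : weakNorm 𝕜 1 v ≤ (K + 1) * ∏ i : Fin n, weakNorm 𝕜 2 (y i) := by
    refine weakNorm_one_le fun φ hφ => ?_
    calc ∑ j, ‖φ (v j)‖ ≤ K * ‖φ‖ * ∏ i, weakNorm 𝕜 2 (y i) :=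
          huniform φ ⟨m, y⟩
    _ ≤ (K + 1) * 1 * ∏ i, weakNorm 𝕜 2 (y i) := by
        refine mul_le_mul_of_nonneg_right ?_ hProdNonneg
        refine mul_le_mul (by linarith) hφ (ContinuousLinearMap.opNorm_nonneg _) (by linarith)
    _ = (K + 1) * ∏ i, weakNorm 𝕜 2 (y i) := by ring
  have happly : ∀ z : E (Fin.last n),
      ‖ContinuousLinearMap.apply 𝕜 𝕜 z‖ ≤ ‖z‖ := fun z =>
    ContinuousLinearMap.opNorm_le_bound _ (norm_nonneg z) fun f => by
      show ‖f z‖ ≤ ‖z‖ * ‖f‖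
      exact (f.le_opNorm z).trans_eq (mul_comm _ _)
  have hw2 : weakNorm 𝕜 2 Φ ≤ weakNorm 𝕜 2 (x (Fin.last n)) := by
    refine weakNorm_le_of_transfer two_pos fun φ hφ => ?_
    refine ⟨φ.comp (ContinuousLinearMap.apply 𝕜 𝕜), ?_, fun j => rfl⟩
    refine ContinuousLinearMap.opNorm_le_bound _ zero_le_one fun z => ?_
    rw [one_mul, ContinuousLinearMap.comp_apply]
    calc ‖φ (ContinuousLinearMap.apply 𝕜 𝕜 z)‖
        ≤ ‖φ‖ * ‖ContinuousLinearMap.apply 𝕜 𝕜 z‖ := φ.le_opNorm _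
    _ ≤ 1 * ‖z‖ := mul_le_mul hφ (happly z) (ContinuousLinearMap.opNorm_nonneg _) zero_le_one
    _ = ‖z‖ := one_mul _
  calc ∑ j, ‖A (fun i => x i j)‖ = ∑ j, ‖Φ j (v j)‖ := by
        refine Finset.sum_congr rfl fun j _ => ?_; rw [hPhi]
  _ ≤ CL * weakNorm 𝕜 1 v * weakNorm 𝕜 2 Φ := hLOineq m v Φ
  _ ≤ CL * ((K + 1) * ∏ i : Fin n, weakNorm 𝕜 2 (y i)) * weakNorm 𝕜 2 (x (Fin.last n)) := by
      refine mul_le_mul ?_ hw2 (weakNorm_nonneg _ _) ?_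
      · exact mul_le_mul_of_nonneg_left hw1 hCLpos.le
      · exact mul_nonneg hCLpos.le (mul_nonneg (by linarith) hProdNonneg)
  _ = CL * (K + 1) * ∏ i : Fin (n + 1), weakNorm 𝕜 2 (x i) := by
      rw [Fin.prod_univ_castSucc]; ring

theorem absSumming_aux {𝕜 : Type*} [RCLike 𝕜] (n : ℕ) (hn : 2 ≤ n) :
    ∀ (E : Fin n → Type u) [∀ i, NormedAddCommGroup (E i)] [∀ i, NormedSpace 𝕜 (E i)],
    (∀ i : Fin n, 2 ≤ i.val → LittlewoodOrlicz 𝕜 (E i →L[𝕜] 𝕜)) →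
    (∀ B : E ⟨0, Nat.zero_lt_of_lt (Nat.lt_of_succ_le hn)⟩ →L[𝕜] E ⟨1, Nat.lt_of_succ_le hn⟩ →L[𝕜] 𝕜,
      ∃ C > 0, ∀ (m : ℕ) (x : Fin m → E ⟨0, Nat.zero_lt_of_lt (Nat.lt_of_succ_le hn)⟩) (y : Fin m → E ⟨1, Nat.lt_of_succ_le hn⟩),
        ∑ j, ‖B (x j) (y j)‖ ≤ C * weakNorm 𝕜 2 x * weakNorm 𝕜 2 y) →
    ∀ A : ContinuousMultilinearMap 𝕜 E 𝕜,
      ∃ C > 0, ∀ (m : ℕ) (x : ∀ i, Fin m → E i),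
        ∑ j, ‖A (fun i => x i j)‖ ≤ C * ∏ i, weakNorm 𝕜 2 (x i) := by
  induction n, hn using Nat.le_induction with
  | base =>
    intro E _ _ hLO hdom A
    set B : E ⟨0, by omega⟩ →L[𝕜] E ⟨1, by omega⟩ →L[𝕜] 𝕜 :=
      A.curryRight.curryRight (fun i => i.elim0) with hBdef
    have hB : ∀ v : ∀ i, E i, A v = B (v ⟨0, by omega⟩) (v ⟨1, by omega⟩) := by
      intro v
      have hv : v = Fin.snoc (Fin.snoc (fun i => i.elim0) (v ⟨0, by omega⟩))
          (v ⟨1, by omega⟩) := by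
        funext i; fin_cases i <;> simp [Fin.snoc]
      conv_lhs => rw [hv]
      rfl
    obtain ⟨C, hC, h⟩ := hdom B
    refine ⟨C, hC, fun m x => ?_⟩
    calc ∑ j, ‖A (fun i => x i j)‖
        = ∑ j, ‖B (x ⟨0, by omega⟩ j) (x ⟨1, by omega⟩ j)‖ := by simp_rw [hB]
    _ ≤ C * weakNorm 𝕜 2 (x ⟨0, by omega⟩) * weakNorm 𝕜 2 (x ⟨1, by omega⟩) := h m _ _
    _ = C * ∏ i, weakNorm 𝕜 2 (x i) := by rw [Fin.prod_univ_two]; ring_nf; rfl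
  | succ n hn ih =>
    intro E _ _ hLO hdom A
    refine step_lemma hn E hLO ?_ A
    intro A'
    refine ih (fun i => E i.castSucc) (fun i hi => hLO i.castSucc hi) ?_ A'
    exact hdom

/-- If `E₃', …, E_n'` have the Littlewood–Orlicz property and every continuous bilinear form
on `E₁ × E₂` is 2-dominated (i.e. absolutely `(1; 2, 2)`-summing), then every continuous
`n`-linear form on `E₁ × ⋯ × E_n` is absolutely `(1; 2, …, 2)`-summing. -/
theorem perez_garcia_generalization {𝕜 : Type*} [RCLike 𝕜] {n : ℕ} (hn : 2 ≤ n)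
    (E : Fin n → Type*) [∀ i, NormedAddCommGroup (E i)] [∀ i, NormedSpace 𝕜 (E i)]
    [∀ i, CompleteSpace (E i)]
    (hLO : ∀ i : Fin n, 2 ≤ i.val → LittlewoodOrlicz 𝕜 (E i →L[𝕜] 𝕜))
    (hdom : ∀ B : E ⟨0, by omega⟩ →L[𝕜] E ⟨1, by omega⟩ →L[𝕜] 𝕜,
      ∃ C > 0, ∀ (m : ℕ) (x : Fin m → E ⟨0, by omega⟩) (y : Fin m → E ⟨1, by omega⟩),
        ∑ j, ‖B (x j) (y j)‖ ≤ C * weakNorm 𝕜 2 x * weakNorm 𝕜 2 y)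
    (A : ContinuousMultilinearMap 𝕜 E 𝕜) :
    IsAbsSumming 1 (fun _ => 2) A := by
  obtain ⟨C, hC, h⟩ := absSumming_aux n hn E hLO hdom A
  exact ⟨C, hC, fun m x => by simpa [Real.rpow_one, one_div_one] using h m x⟩
end
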